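/- arXiv:2312.13814 — 2 statements merged into one kernel-verified Lean document; each statement's English description precedes it below -/
import Mathlib

section
/- Let H be a Hilbert space and let (σ_λ)_{λ∈Λ} be a family of states (positive trace-one operators) on H with support projections P_λ. Suppose N is a POVM on a measurable space such that for each λ there is a point f(λ) with tr(σ_λ N(X)) = δ_{f(λ)}(X) for all measurable X (where δ is the Dirac measure), and singletons are measurable. Then for any λ, λ' with f(λ) ≠ f(λ'), the support projections satisfy P_λ P_{λ'} = 0. -/
open scoped InnerProductSpace Classical
open MeasureTheory ContinuousLinearMap

set_option maxHeartbeats 2000000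
set_option synthInstance.maxHeartbeats 1000000

noncomputable section

/-- A POVM on a measurable space `Ω`, acting on a complex Hilbert space `H`:
a positive-operator-valued map, σ-additive in the weak operator topology,
normalized to the identity. -/
structure POVM (Ω : Type*) [MeasurableSpace Ω] (H : Type*) [NormedAddCommGroup H]
    [InnerProductSpace ℂ H] [CompleteSpace H] where
  toFun : Set Ω → (H →L[ℂ] H)
  pos : ∀ X, MeasurableSet X → (toFun X).IsPositive
  normalized : toFun Set.univ = 1
  additive : ∀ (φ ψ : H) (f : ℕ → Set Ω), (∀ i, MeasurableSet (f i)) →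
    Pairwise (Function.onFun Disjoint f) →
    HasSum (fun i => ⟪φ, (toFun (f i)) ψ⟫_ℂ) ⟪φ, (toFun (⋃ i, f i)) ψ⟫_ℂ

/-- The trace of an operator computed along a Hilbert basis. -/
def traceAlong {ι H : Type*} [NormedAddCommGroup H] [InnerProductSpace ℂ H] [CompleteSpace H]
    (b : HilbertBasis ι ℂ H) (A : H →L[ℂ] H) : ℂ :=
  ∑' i, ⟪b i, A (b i)⟫_ℂ

section Helpers

variable {ι H : Type*} [NormedAddCommGroup H] [InnerProductSpace ℂ H] [CompleteSpace H]

/-- square root of a positive operator, applied twice -/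
lemma sqrt_apply_apply {T : H →L[ℂ] H} (hT : T.IsPositive) (x : H) :
    CFC.sqrt T (CFC.sqrt T x) = T x := by
  have h : CFC.sqrt T * CFC.sqrt T = T :=
    CFC.sqrt_mul_sqrt_self T ((ContinuousLinearMap.nonneg_iff_isPositive T).mpr hT)
  calc CFC.sqrt T (CFC.sqrt T x) = (CFC.sqrt T * CFC.sqrt T) x := rfl
    _ = T x := by rw [h]

lemma sqrt_isPositive {T : H →L[ℂ] H} : (CFC.sqrt T).IsPositive :=
  (ContinuousLinearMap.nonneg_iff_isPositive _).mp (CFC.sqrt_nonneg _)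

lemma symmInner {T : H →L[ℂ] H} (hT : T.IsPositive) (x y : H) :
    ⟪T x, y⟫_ℂ = ⟪x, T y⟫_ℂ :=
  (ContinuousLinearMap.isSelfAdjoint_iff_isSymmetric.mp hT.isSelfAdjoint) x y

/-- positive operator with vanishing quadratic form at x kills x -/
lemma pos_inner_self_zero {C : H →L[ℂ] H} (hC : C.IsPositive) {x : H}
    (h : (⟪x, C x⟫_ℂ).re = 0) : C x = 0 := by
  obtain ⟨D, hDpos, hDD⟩ : ∃ D : H →L[ℂ] H, D.IsPositive ∧ ∀ y, D (D y) = C y :=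
    ⟨CFC.sqrt C, sqrt_isPositive, sqrt_apply_apply hC⟩
  have hDx : ⟪x, C x⟫_ℂ = ⟪D x, D x⟫_ℂ := by
    rw [← hDD x]
    exact (symmInner hDpos x (D x)).symm
  rw [hDx] at h
  have hn : (⟪D x, D x⟫_ℂ) = ((‖D x‖ ^ 2 : ℝ) : ℂ) := by
    rw [inner_self_eq_norm_sq_to_K]; norm_cast
  rw [hn] at h
  simp only [Complex.ofReal_re] at h
  have hDx0 : D x = 0 := by
    have := pow_eq_zero_iff (n := 2) (by norm_num) |>.mp h
    exact norm_eq_zero.mp this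
  rw [← hDD x, hDx0, map_zero]

/-- Parseval for squared norms of coefficients -/
lemma parseval_sq (b : HilbertBasis ι ℂ H) (x : H) :
    HasSum (fun j => ‖⟪b j, x⟫_ℂ‖ ^ 2) (‖x‖ ^ 2) := by
  have h := b.hasSum_inner_mul_inner x x
  have e : ∀ j, ⟪x, b j⟫_ℂ * ⟪b j, x⟫_ℂ = ((‖⟪b j, x⟫_ℂ‖ ^ 2 : ℝ) : ℂ) := by
    intro j
    rw [← inner_conj_symm (b j) x, RCLike.mul_conj, RCLike.norm_conj]
    norm_cast
  simp only [e] at h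
  rw [← Complex.hasSum_ofReal]
  have hx : ⟪x, x⟫_ℂ = ((‖x‖ ^ 2 : ℝ) : ℂ) := by
    rw [inner_self_eq_norm_sq_to_K]; norm_cast
  rwa [hx] at h

/-- Main analytic lemma: positive `C`, positive trace-summable `σ₀`,
`tr(C σ₀) = 0` implies `C σ₀ = 0`. -/
lemma trace_zero_comp (b : HilbertBasis ι ℂ H) {C σ₀ : H →L[ℂ] H}
    (hC : C.IsPositive) (hσ : σ₀.IsPositive)
    (hsum : Summable fun i => ⟪b i, σ₀ (b i)⟫_ℂ)
    (h0 : traceAlong b (C ∘L σ₀) = 0) : C ∘L σ₀ = 0 := by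
  obtain ⟨s, hspos, hss⟩ : ∃ s : H →L[ℂ] H, s.IsPositive ∧ ∀ x, s (s x) = σ₀ x :=
    ⟨CFC.sqrt σ₀, sqrt_isPositive, sqrt_apply_apply hσ⟩
  have hsym_s := symmInner hspos
  have hsym_C := symmInner hC
  -- diagonal of σ₀ equals ‖s bᵢ‖²
  have hdiag : ∀ x : H, ⟪x, σ₀ x⟫_ℂ = ((‖s x‖ ^ 2 : ℝ) : ℂ) := by
    intro x
    rw [← hss x, ← hsym_s x (s x), inner_self_eq_norm_sq_to_K]
    norm_cast
  have hg : Summable fun i => ‖s (b i)‖ ^ 2 := by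
    have h1 : Summable fun i => (⟪b i, σ₀ (b i)⟫_ℂ).re := (Complex.hasSum_re hsum.hasSum).summable
    refine h1.congr fun i => ?_
    rw [hdiag]
    norm_cast
  -- summable: fun i => ‖C (s (b i))‖²
  have hCg : Summable fun i => ‖C (s (b i))‖ ^ 2 := by
    refine Summable.of_nonneg_of_le (fun i => by positivity)
      (fun i => ?_) (hg.mul_left (‖C‖ ^ 2))
    calc ‖C (s (b i))‖ ^ 2 ≤ (‖C‖ * ‖s (b i)‖) ^ 2 := by
          apply pow_le_pow_left₀ (norm_nonneg _) (C.le_opNorm _)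
      _ = ‖C‖ ^ 2 * ‖s (b i)‖ ^ 2 := by ring
  -- HS for (C ∘ s)
  have hK : Summable fun p : ι × ι => ‖⟪b p.2, (C ∘L s) (b p.1)⟫_ℂ‖ ^ 2 := by
    have hnn : 0 ≤ fun p : ι × ι => ‖⟪b p.2, (C ∘L s) (b p.1)⟫_ℂ‖ ^ 2 := fun p => by positivity
    refine (summable_prod_of_nonneg hnn).mpr ⟨?_, ?_⟩
    · intro i
      exact (parseval_sq b ((C ∘L s) (b i))).summable
    · refine hCg.congr fun i => ?_
      exact ((parseval_sq b ((C ∘L s) (b i))).tsum_eq).symm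
  -- HS for (s ∘ C) by transposition
  have hM' : Summable fun p : ι × ι => ‖⟪b p.2, (s ∘L C) (b p.1)⟫_ℂ‖ ^ 2 := by
    have he : ∀ p : ι × ι, ‖⟪b p.2, (s ∘L C) (b p.1)⟫_ℂ‖ ^ 2
        = ‖⟪b p.1, (C ∘L s) (b p.2)⟫_ℂ‖ ^ 2 := by
      intro p
      have : ⟪b p.2, (s ∘L C) (b p.1)⟫_ℂ = (starRingEnd ℂ) ⟪b p.1, (C ∘L s) (b p.2)⟫_ℂ := by
        simp only [ContinuousLinearMap.comp_apply]
        rw [← hsym_s (b p.2) (C (b p.1)), inner_conj_symm (C (s (b p.2))) (b p.1),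
          hsym_C (s (b p.2)) (b p.1)]
      rw [this, RCLike.norm_conj]
    have := (Equiv.prodComm ι ι).summable_iff.mpr hK
    refine this.congr fun p => ?_
    simp only [Function.comp, Equiv.prodComm_apply, Prod.swap]
    exact (he p).symm
  -- HS for s
  have hM : Summable fun p : ι × ι => ‖⟪b p.2, s (b p.1)⟫_ℂ‖ ^ 2 := by
    have hnn : 0 ≤ fun p : ι × ι => ‖⟪b p.2, s (b p.1)⟫_ℂ‖ ^ 2 := fun p => by positivity
    refine (summable_prod_of_nonneg hnn).mpr ⟨?_, ?_⟩
    · intro i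
      exact (parseval_sq b (s (b i))).summable
    · refine hg.congr fun i => ?_
      exact ((parseval_sq b (s (b i))).tsum_eq).symm
  -- the double family
  set F : ι × ι → ℂ := fun p =>
    (starRingEnd ℂ) ⟪b p.2, (s ∘L C) (b p.1)⟫_ℂ * ⟪b p.2, s (b p.1)⟫_ℂ with hF_def
  have hF : Summable F := by
    apply Summable.of_norm
    refine Summable.of_nonneg_of_le (fun p => norm_nonneg _) (fun p => ?_)
      (((hM'.add hM).div_const 2))
    have : ‖F p‖ = ‖⟪b p.2, (s ∘L C) (b p.1)⟫_ℂ‖ * ‖⟪b p.2, s (b p.1)⟫_ℂ‖ := by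
      rw [hF_def]
      rw [norm_mul, RCLike.norm_conj]
    rw [this]
    nlinarith [sq_nonneg (‖⟪b p.2, (s ∘L C) (b p.1)⟫_ℂ‖ - ‖⟪b p.2, s (b p.1)⟫_ℂ‖),
      norm_nonneg (⟪b p.2, (s ∘L C) (b p.1)⟫_ℂ), norm_nonneg (⟪b p.2, s (b p.1)⟫_ℂ)]
  -- fiber sums, first direction
  have hfib1 : ∀ i, HasSum (fun j => F (i, j)) ⟪b i, (C ∘L σ₀) (b i)⟫_ℂ := by
    intro i
    have h := b.hasSum_inner_mul_inner ((s ∘L C) (b i)) (s (b i))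
    have e1 : ∀ j, ⟪(s ∘L C) (b i), b j⟫_ℂ * ⟪b j, s (b i)⟫_ℂ = F (i, j) := by
      intro j
      simp only [hF_def]
      rw [inner_conj_symm ((s ∘L C) (b i)) (b j)]
    have e2 : ⟪(s ∘L C) (b i), s (b i)⟫_ℂ = ⟪b i, (C ∘L σ₀) (b i)⟫_ℂ := by
      simp only [ContinuousLinearMap.comp_apply]
      rw [hsym_s (C (b i)) (s (b i)), hss, hsym_C (b i) (σ₀ (b i))]
    simp only [e1, e2] at h; exact h
  -- fiber sums, second direction
  have hfib2 : ∀ j, HasSum (fun i => F (i, j)) ⟪s (b j), C (s (b j))⟫_ℂ := by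
    intro j
    have h := b.hasSum_inner_mul_inner (s (b j)) ((C ∘L s) (b j))
    have e1 : ∀ i, ⟪s (b j), b i⟫_ℂ * ⟪b i, (C ∘L s) (b j)⟫_ℂ = F (i, j) := by
      intro i
      have h1 : ⟪s (b j), b i⟫_ℂ = ⟪b j, s (b i)⟫_ℂ := hsym_s (b j) (b i)
      have h2 : ⟪b i, (C ∘L s) (b j)⟫_ℂ = (starRingEnd ℂ) ⟪b j, (s ∘L C) (b i)⟫_ℂ := by
        simp only [ContinuousLinearMap.comp_apply]
        rw [← hsym_C (b i) (s (b j)), ← hsym_s (C (b i)) (b j),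
          inner_conj_symm (s (C (b i))) (b j)]
      simp only [hF_def]
      rw [h1, h2, mul_comm]
    have e2 : ⟪s (b j), (C ∘L s) (b j)⟫_ℂ = ⟪s (b j), C (s (b j))⟫_ℂ := rfl
    simp only [e1, e2] at h; exact h
  -- total sum is 0
  have hTr : HasSum (fun i => ⟪b i, (C ∘L σ₀) (b i)⟫_ℂ) (∑' p, F p) :=
    HasSum.prod_fiberwise hF.hasSum hfib1
  have hS0 : (∑' p, F p) = 0 := by
    rw [← hTr.tsum_eq]; exact h0
  have hF0 : HasSum F 0 := hS0 ▸ hF.hasSum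
  have hswap : HasSum (fun q : ι × ι => F (q.2, q.1)) 0 := by
    have := (Equiv.prodComm ι ι).hasSum_iff (f := F) (a := 0) |>.mpr hF0
    exact this
  have hU : HasSum (fun j => ⟪s (b j), C (s (b j))⟫_ℂ) 0 :=
    HasSum.prod_fiberwise hswap hfib2
  have hUre : HasSum (fun j => (⟪s (b j), C (s (b j))⟫_ℂ).re) 0 := by
    simpa using Complex.hasSum_re hU
  have hnn : ∀ j, 0 ≤ (⟪s (b j), C (s (b j))⟫_ℂ).re := fun j => (Complex.nonneg_iff.mp (hC.inner_nonneg_right (s (b j)))).1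
  have hz : ∀ j, (⟪s (b j), C (s (b j))⟫_ℂ).re = 0 := by
    intro j
    exact le_antisymm (le_hasSum hUre j (fun k _ => hnn k)) (hnn j)
  have hCs : ∀ j, C (s (b j)) = 0 := fun j => pos_inner_self_zero hC (hz j)
  have hCsop : C ∘L s = 0 := by
    refine ContinuousLinearMap.ext_on
      (Submodule.dense_iff_topologicalClosure_eq_top.mpr b.dense_span) ?_
    rintro _ ⟨i, rfl⟩
    simp [hCs i]
  ext x
  have : C (s (s x)) = 0 := by
    have := congrArg (fun (T : H →L[ℂ] H) => T (s x)) hCsop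
    simpa using this
  simpa [← hss x] using this

/-- If `C σ₀ = 0` then `C` kills the support projection. -/
lemma comp_proj_zero {C σ₀ P₀ : H →L[ℂ] H} (h : C ∘L σ₀ = 0)
    (hPr : LinearMap.range (P₀ : H →ₗ[ℂ] H)
      = (LinearMap.range (σ₀ : H →ₗ[ℂ] H)).topologicalClosure) : C ∘L P₀ = 0 := by
  have hker : (LinearMap.range (σ₀ : H →ₗ[ℂ] H)).topologicalClosure
      ≤ LinearMap.ker (C : H →ₗ[ℂ] H) := by
    apply Submodule.topologicalClosure_minimal
    · rintro _ ⟨y, rfl⟩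
      have : C (σ₀ y) = 0 := by
        have := congrArg (fun (T : H →L[ℂ] H) => T y) h
        simpa using this
      simpa [LinearMap.mem_ker] using this
    · exact ContinuousLinearMap.isClosed_ker C
  ext x
  have hx : P₀ x ∈ LinearMap.range (P₀ : H →ₗ[ℂ] H) := ⟨x, rfl⟩
  rw [hPr] at hx
  have := hker hx
  simpa [LinearMap.mem_ker] using this

variable {Ω : Type*} [MeasurableSpace Ω]

lemma POVM.empty_eq_zero (N : POVM Ω H) : N.toFun ∅ = 0 := by
  ext ψ
  refine ext_inner_left ℂ fun φ => ?_
  have h := N.additive φ ψ (fun _ => ∅) (fun _ => MeasurableSet.empty)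
    (fun i j hij => by simp [Function.onFun])
  rw [Set.iUnion_empty] at h
  have hc : ⟪φ, N.toFun ∅ ψ⟫_ℂ = 0 := by
    have hs := h.summable
    have ht := hs.tendsto_atTop_zero
    exact (tendsto_nhds_unique tendsto_const_nhds ht)
  simp [hc]

lemma POVM.add_compl (N : POVM Ω H) (X : Set Ω) (hX : MeasurableSet X) :
    N.toFun X + N.toFun Xᶜ = 1 := by
  ext ψ
  refine ext_inner_left ℂ fun φ => ?_
  set seq : ℕ → Set Ω := fun n => if n = 0 then X else if n = 1 then Xᶜ else ∅ with hseq
  have hmeas : ∀ i, MeasurableSet (seq i) := by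
    intro i
    simp only [hseq]
    split_ifs with h1 h2
    · exact hX
    · exact hX.compl
    · exact MeasurableSet.empty
  have hdisj : Pairwise (Function.onFun Disjoint seq) := by
    intro i j hij
    simp only [Function.onFun, hseq]
    rcases i with _ | _ | i <;> rcases j with _ | _ | j <;>
      simp_all [disjoint_compl_right, disjoint_compl_left]
  have hunion : ⋃ n, seq n = Set.univ := by
    apply Set.eq_univ_iff_forall.mpr
    intro x
    by_cases hx : x ∈ X
    · exact Set.mem_iUnion.mpr ⟨0, by simp [hseq, hx]⟩
    · exact Set.mem_iUnion.mpr ⟨1, by simp [hseq, hx]⟩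
  have h := N.additive φ ψ seq hmeas hdisj
  rw [hunion] at h
  set a := ⟪φ, N.toFun X ψ⟫_ℂ with ha
  set c := ⟪φ, N.toFun Xᶜ ψ⟫_ℂ with hc
  have he : (fun n => ⟪φ, N.toFun (seq n) ψ⟫_ℂ)
      = fun n => (if n = 0 then a else 0) + (if n = 1 then c else 0) := by
    funext n
    match n with
    | 0 => simp [hseq, ha]
    | 1 => simp [hseq, hc]
    | (n + 2) => simp [hseq, N.empty_eq_zero]
  rw [he] at h
  have h2 : HasSum (fun n : ℕ => (if n = 0 then a else 0) + (if n = 1 then c else 0)) (a + c) :=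
    (hasSum_ite_eq 0 a).add (hasSum_ite_eq 1 c)
  have huniq : a + c = ⟪φ, N.toFun Set.univ ψ⟫_ℂ := h2.unique h
  rw [N.normalized] at huniq
  simp only [ContinuousLinearMap.add_apply, inner_add_right, ContinuousLinearMap.one_apply]
  rw [← ha, ← hc, huniq]
  simp

end Helpers

/-- If `(σ_λ)` is a family of states with support projections `P_λ`, `N` a POVM,
and `tr(σ_λ N(X)) = δ_{f(λ)}(X)` for all measurable `X`, then `f λ ≠ f λ'` implies
`P_λ P_{λ'} = 0`. -/
theorem support_projections_orthogonal
    {H : Type*} [NormedAddCommGroup H] [InnerProductSpace ℂ H] [CompleteSpace H]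
    {Ω : Type*} [MeasurableSpace Ω] (hsing : ∀ ω : Ω, MeasurableSet ({ω} : Set Ω))
    {Λ : Type*} {ι : Type*} (b : HilbertBasis ι ℂ H)
    (σ : Λ → (H →L[ℂ] H))
    (hσpos : ∀ l, (σ l).IsPositive)
    (hσtr : ∀ l, traceAlong b (σ l) = 1)
    (P : Λ → (H →L[ℂ] H))
    (hPproj : ∀ l, IsIdempotentElem (P l) ∧ IsSelfAdjoint (P l))
    (hPrange : ∀ l, LinearMap.range (P l : H →ₗ[ℂ] H)
      = (LinearMap.range (σ l : H →ₗ[ℂ] H)).topologicalClosure)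
    (N : POVM Ω H) (f : Λ → Ω)
    (hdirac : ∀ l (X : Set Ω), MeasurableSet X →
      traceAlong b ((N.toFun X) ∘L (σ l)) = if f l ∈ X then 1 else 0) :
    ∀ l l', f l ≠ f l' → (P l) ∘L (P l') = 0 := by
  intro l l' hne
  have hsummable : ∀ l₀, Summable fun i => ⟪b i, σ l₀ (b i)⟫_ℂ := by
    intro l₀
    by_contra hcon
    have := tsum_eq_zero_of_not_summable hcon
    have h1 := hσtr l₀
    rw [traceAlong] at h1
    rw [this] at h1
    exact zero_ne_one h1
  set X : Set Ω := {f l} with hX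
  have hXmeas : MeasurableSet X := hsing (f l)
  set A := N.toFun X with hA
  set B := N.toFun Xᶜ with hB
  have hApos : A.IsPositive := N.pos X hXmeas
  have hBpos : B.IsPositive := N.pos Xᶜ hXmeas.compl
  have h1 : traceAlong b (B ∘L σ l) = 0 := by
    rw [hB, hdirac l Xᶜ hXmeas.compl, if_neg]
    simp [hX]
  have h2 : traceAlong b (A ∘L σ l') = 0 := by
    rw [hA, hdirac l' X hXmeas, if_neg]
    simp [hX]
    exact fun h => hne h.symm
  have hBσ : B ∘L σ l = 0 := trace_zero_comp b hBpos (hσpos l) (hsummable l) h1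
  have hAσ : A ∘L σ l' = 0 := trace_zero_comp b hApos (hσpos l') (hsummable l') h2
  have hBP : B ∘L P l = 0 := comp_proj_zero hBσ (hPrange l)
  have hAP' : A ∘L P l' = 0 := comp_proj_zero hAσ (hPrange l')
  -- from B = 1 - A
  have hB1 : A + B = 1 := N.add_compl X hXmeas
  have hid : A * P l = P l := by
    have hBmul : B * P l = 0 := hBP
    have hBeq : B = 1 - A := eq_sub_of_add_eq' hB1
    rw [hBeq, sub_mul, one_mul, sub_eq_zero] at hBmul
    exact hBmul.symm
  have hid2 : P l * A = P l := by
    have := congrArg star hid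
    rw [star_mul, hApos.isSelfAdjoint.star_eq, (hPproj l).2.star_eq] at this
    exact this
  have hA2 : A * P l' = 0 := hAP'
  show P l * P l' = 0
  calc P l * P l' = (P l * A) * P l' := by rw [hid2]
    _ = P l * (A * P l') := by rw [mul_assoc]
    _ = 0 := by rw [hA2, mul_zero]
end
end

section
/- The set SA_n of n-preparable discrete state assemblages with a fixed finite number of outcomes a and settings x, acting on ℂ^d, is compact in the norm topology of the direct sum ⊕_{a,x} L(ℂ^d). -/
open scoped Kronecker ComplexOrder
open Matrix

noncomputable section

/-- Partial trace over the first factor of a matrix on `ℂ^n ⊗ ℂ^d`. -/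
def partialTraceA {n d : ℕ} (M : Matrix (Fin n × Fin d) (Fin n × Fin d) ℂ) :
    Matrix (Fin d) (Fin d) ℂ :=
  fun j j' => ∑ i : Fin n, M (i, j) (i, j')

/-- The set `SA_n` of `n`-preparable state assemblages with `A` outcomes and `X` settings on
`ℂ^d`: those obtained as `σ_{a|x} = tr_A[(N_{a|x} ⊗ id)ρ]` from a state `ρ` on
`ℂ^n ⊗ ℂ^d` (WLOG the ancilla has dimension `n`, which enforces Schmidt number `≤ n`)
and POVMs `{N_{a|x}}_a` on the ancilla. -/
def SA (n d A X : ℕ) :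
    Set (Fin A → Fin X → Matrix (Fin d) (Fin d) ℂ) :=
  {S | ∃ ρ : Matrix (Fin n × Fin d) (Fin n × Fin d) ℂ,
    ρ.PosSemidef ∧ ρ.trace = 1 ∧
    ∃ N : Fin A → Fin X → Matrix (Fin n) (Fin n) ℂ,
      (∀ a x, (N a x).PosSemidef) ∧
      (∀ x, ∑ a, N a x = 1) ∧
      (∀ a x, S a x = partialTraceA (((N a x) ⊗ₖ (1 : Matrix (Fin d) (Fin d) ℂ)) * ρ))}

/-- The set of positive semidefinite matrices is closed. -/
lemma isClosed_posSemidef {m : Type*} [Fintype m] [DecidableEq m] :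
    IsClosed {M : Matrix m m ℂ | M.PosSemidef} := by
  have : {M : Matrix m m ℂ | M.PosSemidef} =
      {M | Mᴴ = M} ∩ ⋂ x : m → ℂ, {M | 0 ≤ star x ⬝ᵥ M.mulVec x} := by
    ext M
    simp [Matrix.posSemidef_iff_dotProduct_mulVec, Matrix.IsHermitian, Set.mem_iInter]
  rw [this]
  refine IsClosed.inter ?_ (isClosed_iInter fun x => ?_)
  · exact isClosed_eq (continuous_id.matrix_conjTranspose) continuous_id
  · exact isClosed_le continuous_const
      ((continuous_const).dotProduct (continuous_id.matrix_mulVec continuous_const))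

/-- Entrywise bound for positive semidefinite matrices from a diagonal bound. -/
lemma posSemidef_entry_bound {m : Type*} [Fintype m] [DecidableEq m]
    {M : Matrix m m ℂ} (h : M.PosSemidef)
    {c : ℝ} (hc : 0 ≤ c) (hd : ∀ i, (M i i).re ≤ c) (i j : m) : ‖M i j‖ ≤ c := by
  obtain ⟨B, rfl⟩ : ∃ B : Matrix m m ℂ, M = Bᴴ * B := by
    open scoped MatrixOrder in
    exact CStarAlgebra.nonneg_iff_eq_star_mul_self.mp h.nonneg
  set x : EuclideanSpace ℂ m := WithLp.toLp 2 (fun k => B k i) with hx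
  set y : EuclideanSpace ℂ m := WithLp.toLp 2 (fun k => B k j) with hy
  have key : ∀ a b : m, (Bᴴ * B) a b =
      @inner ℂ (EuclideanSpace ℂ m) _ (WithLp.toLp 2 (fun k => B k a)) (WithLp.toLp 2 (fun k => B k b)) := by
    intro a b
    simp [Matrix.mul_apply, PiLp.inner_apply, Matrix.conjTranspose_apply, mul_comm]
  have h1 : ‖(Bᴴ * B) i j‖ ≤ ‖x‖ * ‖y‖ := by
    rw [key i j]; exact norm_inner_le_norm _ _
  have hxn : ‖x‖ ≤ Real.sqrt c := by
    rw [@norm_eq_sqrt_re_inner ℂ]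
    apply Real.sqrt_le_sqrt
    rw [← key i i]
    exact hd i
  have hyn : ‖y‖ ≤ Real.sqrt c := by
    rw [@norm_eq_sqrt_re_inner ℂ]
    apply Real.sqrt_le_sqrt
    rw [← key j j]
    exact hd j
  calc ‖(Bᴴ * B) i j‖ ≤ ‖x‖ * ‖y‖ := h1
    _ ≤ Real.sqrt c * Real.sqrt c :=
      mul_le_mul hxn hyn (norm_nonneg _) (Real.sqrt_nonneg _)
    _ = c := Real.mul_self_sqrt hc

/-- The diagonal of a positive semidefinite matrix is nonnegative. -/
lemma posSemidef_diag_nonneg {m : Type*} [Fintype m] [DecidableEq m]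
    {M : Matrix m m ℂ} (h : M.PosSemidef) (i : m) : 0 ≤ M i i := by
  have := h.2 (Finsupp.single i 1)
  simpa [dotProduct, Matrix.mulVec, Pi.single_apply, apply_ite,
    Finset.sum_ite_eq, Finset.sum_ite_eq'] using this

/-- The set of density matrices is compact. -/
lemma isCompact_states {m : Type*} [Fintype m] [DecidableEq m] :
    IsCompact {M : Matrix m m ℂ | M.PosSemidef ∧ M.trace = 1} := by
  have hsub : {M : Matrix m m ℂ | M.PosSemidef ∧ M.trace = 1} ⊆
      Set.pi Set.univ fun _ : m => Set.pi Set.univ fun _ : m => Metric.closedBall (0 : ℂ) 1 := by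
    rintro M ⟨hM, htr⟩ i _ j _
    simp only [Metric.mem_closedBall, dist_zero_right]
    refine posSemidef_entry_bound hM zero_le_one (fun k => ?_) i j
    have hre : ∑ l, (M l l).re = 1 := by
      have := congrArg Complex.re htr
      simpa [Matrix.trace, Matrix.diag, Complex.re_sum] using this
    have hnn : ∀ l, 0 ≤ (M l l).re := fun l =>
      (Complex.le_def.mp (posSemidef_diag_nonneg hM l)).1
    calc (M k k).re ≤ ∑ l, (M l l).re :=
          Finset.single_le_sum (fun l _ => hnn l) (Finset.mem_univ k)
      _ = 1 := hre
  have hcl : IsClosed {M : Matrix m m ℂ | M.PosSemidef ∧ M.trace = 1} := by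
    refine IsClosed.inter isClosed_posSemidef ?_
    exact isClosed_eq (continuous_id.matrix_trace) continuous_const
  refine IsCompact.of_isClosed_subset ?_ hcl hsub
  exact isCompact_univ_pi fun _ => isCompact_univ_pi fun _ => isCompact_closedBall _ _

/-- The set of POVM families is compact. -/
lemma isCompact_povms (n A X : ℕ) :
    IsCompact {N : Fin A → Fin X → Matrix (Fin n) (Fin n) ℂ |
      (∀ a x, (N a x).PosSemidef) ∧ ∀ x, ∑ a, N a x = 1} := by
  have hsub : {N : Fin A → Fin X → Matrix (Fin n) (Fin n) ℂ |
      (∀ a x, (N a x).PosSemidef) ∧ ∀ x, ∑ a, N a x = 1} ⊆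
      Set.pi Set.univ fun _ : Fin A => Set.pi Set.univ fun _ : Fin X =>
        Set.pi Set.univ fun _ : Fin n => Set.pi Set.univ fun _ : Fin n =>
          Metric.closedBall (0 : ℂ) 1 := by
    rintro N ⟨hpsd, hsum⟩ a _ x _ i _ j _
    simp only [Metric.mem_closedBall, dist_zero_right]
    refine posSemidef_entry_bound (hpsd a x) zero_le_one (fun k => ?_) i j
    have h1 : ∑ a', (N a' x) k k = 1 := by
      have := congrFun (congrFun (hsum x) k) k
      simpa [Matrix.sum_apply, Matrix.one_apply] using this
    have hre : ∑ a', ((N a' x) k k).re = 1 := by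
      have := congrArg Complex.re h1
      simpa [Complex.re_sum] using this
    have hnn : ∀ a', 0 ≤ ((N a' x) k k).re := fun a' =>
      (Complex.le_def.mp (posSemidef_diag_nonneg (hpsd a' x) k)).1
    calc ((N a x) k k).re ≤ ∑ a', ((N a' x) k k).re :=
          Finset.single_le_sum (fun a' _ => hnn a') (Finset.mem_univ a)
      _ = 1 := hre
  have hcl : IsClosed {N : Fin A → Fin X → Matrix (Fin n) (Fin n) ℂ |
      (∀ a x, (N a x).PosSemidef) ∧ ∀ x, ∑ a, N a x = 1} := by
    have : {N : Fin A → Fin X → Matrix (Fin n) (Fin n) ℂ |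
        (∀ a x, (N a x).PosSemidef) ∧ ∀ x, ∑ a, N a x = 1} =
        (⋂ a, ⋂ x, {N | (N a x).PosSemidef}) ∩ ⋂ x, {N | ∑ a, N a x = 1} := by
      ext N
      simp [Set.mem_iInter, forall_and]
    rw [this]
    refine IsClosed.inter (isClosed_iInter fun a => isClosed_iInter fun x => ?_)
      (isClosed_iInter fun x => ?_)
    · exact isClosed_posSemidef.preimage
        (show Continuous fun N : Fin A → Fin X → Matrix (Fin n) (Fin n) ℂ => N a x from
          (continuous_apply x).comp (continuous_apply a))
    · refine isClosed_eq ?_ continuous_const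
      exact continuous_finset_sum _ fun a _ =>
        (continuous_apply x).comp (continuous_apply a)
  refine IsCompact.of_isClosed_subset ?_ hcl hsub
  exact isCompact_univ_pi fun _ => isCompact_univ_pi fun _ =>
    isCompact_univ_pi fun _ => isCompact_univ_pi fun _ => isCompact_closedBall _ _

/-- the set of `n`-preparable discrete state assemblages with a fixed finite
number of outcomes and settings on `ℂ^d` is compact. -/
theorem SA_isCompact (n d A X : ℕ) :
    IsCompact (SA n d A X) := by
  classical
  set P := {M : Matrix (Fin n × Fin d) (Fin n × Fin d) ℂ | M.PosSemidef ∧ M.trace = 1}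
  set Q := {N : Fin A → Fin X → Matrix (Fin n) (Fin n) ℂ |
      (∀ a x, (N a x).PosSemidef) ∧ ∀ x, ∑ a, N a x = 1}
  set f : Matrix (Fin n × Fin d) (Fin n × Fin d) ℂ ×
      (Fin A → Fin X → Matrix (Fin n) (Fin n) ℂ) →
      (Fin A → Fin X → Matrix (Fin d) (Fin d) ℂ) :=
    fun p => fun a x => partialTraceA ((p.2 a x ⊗ₖ (1 : Matrix (Fin d) (Fin d) ℂ)) * p.1)
    with hf
  have himg : SA n d A X = f '' (P ×ˢ Q) := by
    ext S
    constructor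
    · rintro ⟨ρ, hpsd, htr, N, hNpsd, hNsum, hS⟩
      refine ⟨(ρ, N), ⟨⟨hpsd, htr⟩, ⟨hNpsd, hNsum⟩⟩, ?_⟩
      funext a x
      exact (hS a x).symm
    · rintro ⟨⟨ρ, N⟩, ⟨⟨hpsd, htr⟩, ⟨hNpsd, hNsum⟩⟩, rfl⟩
      exact ⟨ρ, hpsd, htr, N, hNpsd, hNsum, fun a x => rfl⟩
  rw [himg]
  have hcont : Continuous f := by
    apply continuous_pi; intro a
    apply continuous_pi; intro x
    have hN : Continuous fun p : Matrix (Fin n × Fin d) (Fin n × Fin d) ℂ ×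
        (Fin A → Fin X → Matrix (Fin n) (Fin n) ℂ) => p.2 a x :=
      (continuous_apply x).comp ((continuous_apply a).comp continuous_snd)
    have hk : Continuous fun p : Matrix (Fin n × Fin d) (Fin n × Fin d) ℂ ×
        (Fin A → Fin X → Matrix (Fin n) (Fin n) ℂ) =>
        (p.2 a x) ⊗ₖ (1 : Matrix (Fin d) (Fin d) ℂ) := by
      apply continuous_matrix; intro u v
      simp only [Matrix.kroneckerMap_apply]
      exact (hN.matrix_elem u.1 v.1).mul continuous_const
    have hmul : Continuous fun p : Matrix (Fin n × Fin d) (Fin n × Fin d) ℂ ×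
        (Fin A → Fin X → Matrix (Fin n) (Fin n) ℂ) =>
        ((p.2 a x) ⊗ₖ (1 : Matrix (Fin d) (Fin d) ℂ)) * p.1 :=
      hk.matrix_mul continuous_fst
    apply continuous_matrix; intro j j'
    exact continuous_finset_sum _ fun i _ => hmul.matrix_elem (i, j) (i, j')
  exact (isCompact_states.prod (isCompact_povms n A X)).image hcont
end
end
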